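/- For the coefficients h_n satisfying the three-term recursion (t^{n-1}ab - c^{-1}d^{-1}) h_n + (t^{n-1}(a+b) - (c^{-1}+d^{-1})) h_{n-1} + (t^{n-1}-1) h_{n-2} = 0 with h_0 = 1, the following contiguous relation holds: h_{n+1}(a,b,c,d) + c h_n(a,b,c,d) = -((1-ac)(1-bc)d/(1-abcd)) h_n(a,b,tc,d). -/

import Mathlib

/-- For the coefficients `h n` (parameters `(a,b,c,d)`) and `g n`
(parameters `(a,b,tc,d)`) satisfying the three-term recursion
`(t^(n-1)ab - c⁻¹d⁻¹) h n + (t^(n-1)(a+b) - (c⁻¹+d⁻¹)) h (n-1) + (t^(n-1)-1) h (n-2) = 0`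
with `h 0 = 1`, the contiguous relation
`h_{n+1}(a,b,c,d) + c h_n(a,b,c,d) = -((1-ac)(1-bc)d/(1-abcd)) h_n(a,b,tc,d)` holds. -/
theorem statement19 {F : Type*} [Field F] (t a b c d : F)
    (ht : t ≠ 0) (ha : a ≠ 0) (hb : b ≠ 0) (hc : c ≠ 0) (hd : d ≠ 0)
    (habcd : 1 - a * b * c * d ≠ 0)
    (hden : ∀ n : ℕ, 1 ≤ n → t ^ (n - 1) * a * b - c⁻¹ * d⁻¹ ≠ 0)
    (hden' : ∀ n : ℕ, 1 ≤ n → t ^ (n - 1) * a * b - (t * c)⁻¹ * d⁻¹ ≠ 0)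
    (h g : ℕ → F)
    (h0 : h 0 = 1)
    (h1 : h 1 = (a + b - c⁻¹ - d⁻¹) / (c⁻¹ * d⁻¹ - a * b))
    (hrec : ∀ n : ℕ, 2 ≤ n →
      (t ^ (n - 1) * a * b - c⁻¹ * d⁻¹) * h n
        + (t ^ (n - 1) * (a + b) - (c⁻¹ + d⁻¹)) * h (n - 1)
        + (t ^ (n - 1) - 1) * h (n - 2) = 0)
    (g0 : g 0 = 1)
    (g1 : g 1 = (a + b - (t * c)⁻¹ - d⁻¹) / ((t * c)⁻¹ * d⁻¹ - a * b))
    (grec : ∀ n : ℕ, 2 ≤ n →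
      (t ^ (n - 1) * a * b - (t * c)⁻¹ * d⁻¹) * g n
        + (t ^ (n - 1) * (a + b) - ((t * c)⁻¹ + d⁻¹)) * g (n - 1)
        + (t ^ (n - 1) - 1) * g (n - 2) = 0) :
    ∀ n : ℕ,
      h (n + 1) + c * h n
        = -((1 - a * c) * (1 - b * c) * d / (1 - a * b * c * d)) * g n := by
  have htc : t * c ≠ 0 := mul_ne_zero ht hc
  have hD1' : c⁻¹ * d⁻¹ - a * b ≠ 0 := by
    have := hden 1 le_rfl; simp only [Nat.sub_self, pow_zero, one_mul] at this
    intro H; exact this (by linear_combination -H)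
  have hD2' : (t * c)⁻¹ * d⁻¹ - a * b ≠ 0 := by
    have := hden' 1 le_rfl; simp only [Nat.sub_self, pow_zero, one_mul] at this
    intro H; exact this (by linear_combination -H)
  -- cleared initial values
  have h1'' : h 1 * (1 - a * b * c * d) = (a + b) * c * d - d - c := by
    rw [h1, div_mul_eq_mul_div, div_eq_iff hD1']
    field_simp
  have g1'' : g 1 * (1 - a * b * t * c * d) = (a + b) * t * c * d - d - t * c := by
    rw [g1, div_mul_eq_mul_div, div_eq_iff hD2']
    field_simp
  -- key induction on the cleared statement
  have key : ∀ n : ℕ, (1 - a * b * c * d) * (h (n + 1) + c * h n)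
      = -((1 - a * c) * (1 - b * c) * d) * g n := by
    have base0 : (1 - a * b * c * d) * (h 1 + c * h 0)
        = -((1 - a * c) * (1 - b * c) * d) * g 0 := by
      rw [h0, g0]; linear_combination h1''
    have base1 : (1 - a * b * c * d) * (h 2 + c * h 1)
        = -((1 - a * c) * (1 - b * c) * d) * g 1 := by
      have hA : t * a * b * c * d - 1 ≠ 0 := by
        have h2d := hden 2 (by norm_num)
        simp only [show (2:ℕ) - 1 = 1 from rfl, pow_one] at h2d
        have hfact : t * a * b * c * d - 1 = (t * a * b - c⁻¹ * d⁻¹) * (c * d) := by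
          field_simp
        rw [hfact]; exact mul_ne_zero h2d (mul_ne_zero hc hd)
      have E0 : (t * a * b * c * d - 1) * h 2 + (t * c * d * (a + b) - (c + d)) * h 1
          + (t - 1) * (c * d) = 0 := by
        have e := hrec 2 le_rfl
        simp only [show (2:ℕ) - 1 = 1 from rfl, show (2:ℕ) - 2 = 0 from rfl, pow_one, h0,
          mul_one] at e
        field_simp at e
        linear_combination e
      rcases mul_eq_zero.mp (show (t * a * b * c * d - 1) *
          ((1 - a * b * c * d) * (h 2 + c * h 1) - -((1 - a * c) * (1 - b * c) * d) * g 1) = 0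
          from by
        linear_combination (1 - a * b * c * d) * E0
          + (t * a * b * c * c * d - t * c * d * (a + b) + d) * h1''
          + (-(1 - a * c) * (1 - b * c) * d) * g1'') with H | H
      · exact absurd H hA
      · linear_combination H
    have step : ∀ n : ℕ,
        (1 - a * b * c * d) * (h (n + 1) + c * h n) = -((1 - a * c) * (1 - b * c) * d) * g n →
        (1 - a * b * c * d) * (h (n + 2) + c * h (n + 1))
          = -((1 - a * c) * (1 - b * c) * d) * g (n + 1) →
        (1 - a * b * c * d) * (h (n + 3) + c * h (n + 2))
          = -((1 - a * c) * (1 - b * c) * d) * g (n + 2) := by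
      intro n I0 I1
      have E1 : (t ^ (n + 2) * a * b * c * d - 1) * h (n + 3)
          + (t ^ (n + 2) * c * d * (a + b) - (c + d)) * h (n + 2)
          + (t ^ (n + 2) - 1) * (c * d) * h (n + 1) = 0 := by
        have e := hrec (n + 3) (by omega)
        simp only [show n + 3 - 1 = n + 2 from rfl, show n + 3 - 2 = n + 1 from rfl] at e
        field_simp at e
        linear_combination e
      have E2 : (t ^ (n + 1) * a * b * c * d - 1) * h (n + 2)
          + (t ^ (n + 1) * c * d * (a + b) - (c + d)) * h (n + 1)
          + (t ^ (n + 1) - 1) * (c * d) * h n = 0 := by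
        have e := hrec (n + 2) (by omega)
        simp only [show n + 2 - 1 = n + 1 from rfl, show n + 2 - 2 = n from rfl] at e
        field_simp at e
        linear_combination e
      have E3 : (t ^ (n + 2) * a * b * c * d - 1) * g (n + 2)
          + (t ^ (n + 1) * t * c * d * (a + b) - (d + t * c)) * g (n + 1)
          + (t ^ (n + 1) - 1) * (t * c * d) * g n = 0 := by
        have e := grec (n + 2) (by omega)
        simp only [show n + 2 - 1 = n + 1 from rfl, show n + 2 - 2 = n from rfl] at e
        field_simp at e
        linear_combination e
      have hM : t ^ (n + 2) * a * b * c * d - 1 ≠ 0 := by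
        have hnd := hden (n + 3) (by omega)
        simp only [show n + 3 - 1 = n + 2 from rfl] at hnd
        have hfact : t ^ (n + 2) * a * b * c * d - 1
            = (t ^ (n + 2) * a * b - c⁻¹ * d⁻¹) * (c * d) := by
          field_simp
        rw [hfact]; exact mul_ne_zero hnd (mul_ne_zero hc hd)
      rcases mul_eq_zero.mp (show (t ^ (n + 2) * a * b * c * d - 1) *
          ((1 - a * b * c * d) * (h (n + 3) + c * h (n + 2))
            - -((1 - a * c) * (1 - b * c) * d) * g (n + 2)) = 0 from by
        linear_combination (1 - a * b * c * d) * E1 + t * c * (1 - a * b * c * d) * E2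
          + (1 - a * c) * (1 - b * c) * d * E3
          + (d + t * c - t ^ (n + 1) * t * c * d * (a + b)) * I1
          + (-(t ^ (n + 1) - 1) * t * c * d) * I0) with H | H
      · exact absurd H hM
      · linear_combination H
    intro n
    induction n using Nat.twoStepInduction with
    | zero => exact base0
    | one => exact base1
    | more n I0 I1 => exact step n I0 I1
  intro n
  have := key n
  rw [neg_mul, div_mul_eq_mul_div, ← neg_div, eq_div_iff habcd]
  linear_combination this
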